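/- Let E be a real normed space, B ≥ 0, and b : E × E → E a bilinear map with ‖b(u,v)‖ ≤ B‖u‖‖v‖ for all u,v. Fix x, y ∈ E, let L_n denote the set of full binary trees with n leaves labeled by x or y, and let α be a real coefficient assignment on ⋃_{n≥1} L_n with |α_T| ≤ K for all T, where K ≥ 1. If B(‖x‖ + ‖y‖) < 1/(4K), then ∑_{n≥1} ∑_{T ∈ L_n} |α_T| · ‖eval_b(T)‖ < ∞; that is, the family (α_T · eval_b(T)) indexed by all labeled trees is absolutely summable in norm. -/
import Mathlib


/-- A full binary tree whose leaves are labeled by `true` (for `x`) or `false` (for `y`). -/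
inductive LTree : Type
  | leaf : Bool → LTree
  | node : LTree → LTree → LTree

namespace LTree

/-- Number of leaves of a labeled full binary tree. -/
def leaves : LTree → ℕ
  | leaf _ => 1
  | node l r => l.leaves + r.leaves

/-- Evaluation of a labeled full binary tree: a leaf labeled `true` evaluates to `x`,
a leaf labeled `false` evaluates to `y`, and an internal node applies `b` to the
evaluations of its two subtrees. -/
def eval {E : Type*} (b : E → E → E) (x y : E) : LTree → E
  | leaf true => x
  | leaf false => y
  | node l r => b (eval b x y l) (eval b x y r)

end LTree

deriving instance DecidableEq for LTree

namespace BchAux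

lemma leaves_pos : ∀ T : LTree, 1 ≤ T.leaves
  | .leaf _ => le_refl 1
  | .node l r => by
      have := leaves_pos l; have := leaves_pos r
      simp only [LTree.leaves]; omega

def allTrees : ℕ → Finset LTree
  | 0 => ∅
  | 1 => {.leaf true, .leaf false}
  | (n+2) => (Finset.range (n+1)).attach.biUnion fun k =>
      ((allTrees (k.1+1)) ×ˢ (allTrees (n+1-k.1))).image fun p => .node p.1 p.2
  decreasing_by
    · have := Finset.mem_range.mp k.2; omega
    · have := Finset.mem_range.mp k.2; omega

lemma mem_allTrees_self : ∀ T : LTree, T ∈ allTrees T.leaves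
  | .leaf b => by cases b <;> simp [allTrees, LTree.leaves]
  | .node l r => by
      have hl := mem_allTrees_self l
      have hr := mem_allTrees_self r
      have h1 := leaves_pos l
      have h2 := leaves_pos r
      have hm : (LTree.node l r).leaves = (l.leaves + r.leaves - 2) + 2 := by
        simp only [LTree.leaves]; omega
      rw [hm, allTrees]
      apply Finset.mem_biUnion.mpr
      refine ⟨⟨l.leaves - 1, Finset.mem_mk.mpr ?_⟩, Finset.mem_attach _ _, ?_⟩
      · exact Multiset.mem_range.mpr (by omega)
      · apply Finset.mem_image.mpr
        refine ⟨(l, r), Finset.mem_product.mpr ⟨?_, ?_⟩, rfl⟩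
        · have e : l.leaves - 1 + 1 = l.leaves := by omega
          rw [e]; exact hl
        · have e : l.leaves + r.leaves - 2 + 1 - (l.leaves - 1) = r.leaves := by omega
          rw [e]; exact hr

lemma leaves_of_mem_allTrees : ∀ n, ∀ T ∈ allTrees n, T.leaves = n := by
  intro n
  induction n using Nat.strong_induction_on with
  | _ n ih =>
    match n with
    | 0 => intro T hT; simp [allTrees] at hT
    | 1 =>
      intro T hT
      simp only [allTrees, Finset.mem_insert, Finset.mem_singleton] at hT
      rcases hT with h | h <;> simp [h, LTree.leaves]
    | (m+2) =>
      intro T hT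
      rw [allTrees] at hT
      obtain ⟨k, -, hk⟩ := Finset.mem_biUnion.mp hT
      obtain ⟨p, hp, rfl⟩ := Finset.mem_image.mp hk
      rw [Finset.mem_product] at hp
      have hkr := Finset.mem_range.mp k.2
      have h1 := ih (k.1+1) (by omega) p.1 hp.1
      have h2 := ih (m+1-k.1) (by omega) p.2 hp.2
      simp only [LTree.leaves, h1, h2]; omega


noncomputable def wt (B cx cy : ℝ) : LTree → ℝ
  | .leaf true => cx
  | .leaf false => cy
  | .node l r => B * wt B cx cy l * wt B cx cy r

lemma wt_nonneg {B cx cy : ℝ} (hB : 0 ≤ B) (hx : 0 ≤ cx) (hy : 0 ≤ cy) :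
    ∀ T, 0 ≤ wt B cx cy T
  | .leaf true => hx
  | .leaf false => hy
  | .node l r => mul_nonneg (mul_nonneg hB (wt_nonneg hB hx hy l)) (wt_nonneg hB hx hy r)

lemma catalan_le_four_pow (n : ℕ) : catalan n ≤ 4 ^ n := by
  have h1 : catalan n ≤ (n+1) * catalan n := Nat.le_mul_of_pos_left _ (by omega)
  rw [succ_mul_catalan_eq_centralBinom] at h1
  refine h1.trans ?_
  have h2 : n.centralBinom ≤ 2 ^ (2*n) := by
    rw [← Nat.sum_range_choose (2*n)]
    exact Finset.single_le_sum (f := fun i => (2*n).choose i) (fun _ _ => Nat.zero_le _)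
      (Finset.mem_range.mpr (by omega))
  calc n.centralBinom ≤ 2 ^ (2*n) := h2
    _ = 4 ^ n := by rw [show (4:ℕ) = 2^2 from rfl, ← pow_mul]

lemma sum_wt (B cx cy : ℝ) : ∀ n : ℕ,
    ∑ T ∈ allTrees (n+1), wt B cx cy T = (catalan n : ℝ) * B^n * (cx+cy)^(n+1) := by
  intro n
  induction n using Nat.strong_induction_on with
  | _ n ih =>
    match n with
    | 0 =>
      rw [allTrees]
      rw [Finset.sum_insert (by decide), Finset.sum_singleton]
      simp [wt, catalan_zero]
    | (m+1) =>
      rw [show m+1+1 = m+2 from rfl, allTrees]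
      have hdisj : (((Finset.range (m+1)).attach : Finset _) : Set _).PairwiseDisjoint
          (fun k : {x // x ∈ Finset.range (m+1)} =>
            ((allTrees (k.1+1)) ×ˢ (allTrees (m+1-k.1))).image
              fun p : LTree × LTree => LTree.node p.1 p.2) := by
        intro k hk1 k' hk2 hne
        simp only [Function.onFun]
        rw [Finset.disjoint_left]
        rintro T hT hT'
        obtain ⟨p, hp, rfl⟩ := Finset.mem_image.mp hT
        obtain ⟨q, hq, hq2⟩ := Finset.mem_image.mp hT'
        rw [Finset.mem_product] at hp hq
        have e1 := leaves_of_mem_allTrees _ p.1 hp.1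
        have e2 := leaves_of_mem_allTrees _ q.1 hq.1
        injection hq2 with a b
        rw [a] at e2
        exact hne (Subtype.ext (by omega))
      rw [Finset.sum_biUnion hdisj]
      have hinner : ∀ k : {x // x ∈ Finset.range (m+1)},
          ∑ T ∈ ((allTrees (k.1+1)) ×ˢ (allTrees (m+1-k.1))).image
              (fun p : LTree × LTree => LTree.node p.1 p.2), wt B cx cy T
          = ((catalan k.1 * catalan (m - k.1) : ℕ) : ℝ) * B^(m+1) * (cx+cy)^(m+2) := by
        intro k
        have hkr := Finset.mem_range.mp k.2
        rw [Finset.sum_image (by rintro ⟨a,b⟩ - ⟨c,d⟩ - h; injection h with h1 h2; exact Prod.ext h1 h2)]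
        rw [Finset.sum_product]
        have key : ∑ a ∈ allTrees (k.1+1), ∑ b ∈ allTrees (m+1-k.1), wt B cx cy (a.node b)
            = B * (∑ a ∈ allTrees (k.1+1), wt B cx cy a)
              * (∑ b ∈ allTrees (m+1-k.1), wt B cx cy b) := by
          rw [mul_assoc, Finset.sum_mul_sum, Finset.mul_sum]
          refine Finset.sum_congr rfl fun a _ => ?_
          rw [Finset.mul_sum]
          exact Finset.sum_congr rfl fun b _ => mul_assoc B _ _
        rw [key, ih k.1 (by omega)]
        have e : m + 1 - k.1 = (m - k.1) + 1 := by omega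
        rw [e, ih (m - k.1) (by omega)]
        have ebm : B * (B ^ k.1 * B ^ (m - k.1)) = B ^ (m+1) := by
          rw [← pow_add, show k.1 + (m - k.1) = m by omega, ← pow_succ']
        have ecm : (cx + cy) ^ (k.1 + 1) * (cx + cy) ^ (m - k.1 + 1) = (cx+cy) ^ (m+2) := by
          rw [← pow_add, show (k.1 + 1) + (m - k.1 + 1) = m + 2 by omega]
        rw [show B * (((catalan k.1 : ℝ)) * B ^ k.1 * (cx + cy) ^ (k.1 + 1)) *
            (((catalan (m - k.1) : ℝ)) * B ^ (m - k.1) * (cx + cy) ^ (m - k.1 + 1))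
            = (((catalan k.1 : ℝ)) * ((catalan (m - k.1) : ℝ))) * (B * (B ^ k.1 * B ^ (m - k.1))) *
              ((cx + cy) ^ (k.1 + 1) * (cx + cy) ^ (m - k.1 + 1)) by ring, ebm, ecm]
        push_cast
        ring
      rw [Finset.sum_congr rfl (fun k _ => hinner k)]
      rw [← Finset.sum_mul, ← Finset.sum_mul, Finset.sum_attach _
        (fun k => ((catalan k * catalan (m - k) : ℕ) : ℝ))]
      rw [← Nat.cast_sum]
      congr 3
      rw [catalan_succ]
      rw [Finset.sum_range fun i => catalan i * catalan (m - i)]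


lemma eval_le_wt {E : Type*} [NormedAddCommGroup E] [NormedSpace ℝ E]
    {B : ℝ} (hB : 0 ≤ B) (b : E →ₗ[ℝ] E →ₗ[ℝ] E)
    (hb : ∀ u v : E, ‖b u v‖ ≤ B * ‖u‖ * ‖v‖) (x y : E) :
    ∀ T : LTree, ‖T.eval (fun u v => b u v) x y‖ ≤ wt B ‖x‖ ‖y‖ T
  | .leaf true => le_refl _
  | .leaf false => le_refl _
  | .node l r => by
      have hl := eval_le_wt hB b hb x y l
      have hr := eval_le_wt hB b hb x y r
      have h0l := norm_nonneg (l.eval (fun u v => b u v) x y)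
      have h0r := norm_nonneg (r.eval (fun u v => b u v) x y)
      calc ‖(LTree.node l r).eval (fun u v => b u v) x y‖
          = ‖b (l.eval (fun u v => b u v) x y) (r.eval (fun u v => b u v) x y)‖ := rfl
        _ ≤ B * ‖l.eval (fun u v => b u v) x y‖ * ‖r.eval (fun u v => b u v) x y‖ := hb _ _
        _ ≤ B * wt B ‖x‖ ‖y‖ l * wt B ‖x‖ ‖y‖ r := by
            apply mul_le_mul
            · exact mul_le_mul_of_nonneg_left hl hB
            · exact hr
            · exact h0r
            · exact mul_nonneg hB (wt_nonneg hB (norm_nonneg x) (norm_nonneg y) l)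
        _ = wt B ‖x‖ ‖y‖ (LTree.node l r) := rfl

noncomputable def treeEquiv : LTree ≃ (Σ n : ℕ, {T : LTree // T ∈ allTrees (n+1)}) where
  toFun T := ⟨T.leaves - 1, ⟨T, by
    have := leaves_pos T
    have e : T.leaves - 1 + 1 = T.leaves := by omega
    rw [e]; exact mem_allTrees_self T⟩⟩
  invFun p := p.2.1
  left_inv T := rfl
  right_inv p := by
    rcases p with ⟨n, T, hT⟩
    have hl : T.leaves = n + 1 := leaves_of_mem_allTrees _ T hT
    have hn : T.leaves - 1 = n := by omega
    subst hn
    rfl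


end BchAux

/-- convergence of the BCH series in special Banach–Malcev algebras:
if `B(‖x‖+‖y‖) < 1/(4K)` then the family `(α_T · eval_b(T))`, indexed by all labeled full
binary trees (of all sizes `n ≥ 1`), is absolutely summable in norm. -/
theorem bch_convergence {E : Type*} [NormedAddCommGroup E] [NormedSpace ℝ E]
    (B : ℝ) (hB : 0 ≤ B) (b : E →ₗ[ℝ] E →ₗ[ℝ] E)
    (hb : ∀ u v : E, ‖b u v‖ ≤ B * ‖u‖ * ‖v‖)
    (x y : E) (K : ℝ) (hK : 1 ≤ K)
    (α : LTree → ℝ) (hα : ∀ T, |α T| ≤ K)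
    (h : B * (‖x‖ + ‖y‖) < 1 / (4 * K)) :
    Summable (fun T : LTree => |α T| * ‖T.eval (fun u v => b u v) x y‖) := by
  classical
  set M : ℝ := ‖x‖ + ‖y‖ with hM
  have hM0 : 0 ≤ M := add_nonneg (norm_nonneg x) (norm_nonneg y)
  have hK0 : (0:ℝ) < K := lt_of_lt_of_le one_pos hK
  have hwt0 : ∀ T, 0 ≤ BchAux.wt B ‖x‖ ‖y‖ T :=
    BchAux.wt_nonneg hB (norm_nonneg x) (norm_nonneg y)
  -- the majorant
  have hg : Summable (fun T : LTree => K * BchAux.wt B ‖x‖ ‖y‖ T) := by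
    rw [← BchAux.treeEquiv.symm.summable_iff]
    simp only [Function.comp_def]
    have hFnn : ∀ p : Σ n : ℕ, {T : LTree // T ∈ BchAux.allTrees (n+1)},
        0 ≤ K * BchAux.wt B ‖x‖ ‖y‖ (BchAux.treeEquiv.symm p) :=
      fun p => mul_nonneg hK0.le (hwt0 _)
    rw [summable_sigma_of_nonneg hFnn]
    constructor
    · intro n
      exact Summable.of_finite
    · have htsum : ∀ n : ℕ, (∑' T : {T : LTree // T ∈ BchAux.allTrees (n+1)},
          K * BchAux.wt B ‖x‖ ‖y‖ T.1)
          = K * ((catalan n : ℝ) * B^n * M^(n+1)) := by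
        intro n
        rw [Finset.tsum_subtype (BchAux.allTrees (n+1))
          (fun T => K * BchAux.wt B ‖x‖ ‖y‖ T)]
        rw [← Finset.mul_sum, BchAux.sum_wt]
      have egoal : (fun n : ℕ => ∑' T : {T : LTree // T ∈ BchAux.allTrees (n+1)},
          K * BchAux.wt B ‖x‖ ‖y‖ (BchAux.treeEquiv.symm ⟨n, T⟩))
          = fun n : ℕ => K * ((catalan n : ℝ) * B^n * M^(n+1)) := funext htsum
      rw [egoal]
      -- compare with geometric series
      have hr0 : 0 ≤ 4 * (B * M) := by positivity
      have hr1 : 4 * (B * M) < 1 := by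
        have h4K : 0 < 4 * K := by positivity
        rw [lt_div_iff₀ h4K] at h
        calc 4 * (B * M) ≤ 4 * K * (B * M) := by nlinarith [mul_nonneg hB hM0]
          _ < 1 := by linarith [h]
      have hgeo : Summable (fun n : ℕ => (K * M) * (4 * (B * M))^n) :=
        (summable_geometric_of_lt_one hr0 hr1).mul_left _
      apply Summable.of_nonneg_of_le _ _ hgeo
      · intro n; positivity
      · intro n
        have hcat : (catalan n : ℝ) ≤ (4:ℝ)^n := by
          exact_mod_cast Nat.cast_le.mpr (BchAux.catalan_le_four_pow n)
        calc K * ((catalan n : ℝ) * B^n * M^(n+1))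
            = K * M * ((catalan n : ℝ) * (B^n * M^n)) := by ring
          _ ≤ K * M * ((4:ℝ)^n * (B^n * M^n)) := by
              have hz : (0:ℝ) ≤ B^n * M^n := by positivity
              have h1 : (catalan n : ℝ) * (B^n * M^n) ≤ (4:ℝ)^n * (B^n * M^n) :=
                mul_le_mul_of_nonneg_right hcat hz
              exact mul_le_mul_of_nonneg_left h1 (mul_nonneg hK0.le hM0)
          _ = (K * M) * (4 * (B * M))^n := by rw [mul_pow, mul_pow]
  apply Summable.of_nonneg_of_le _ _ hg
  · intro T; positivity
  · intro T
    have h1 : |α T| ≤ K := hα T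
    have h2 := BchAux.eval_le_wt hB b hb x y T
    calc |α T| * ‖T.eval (fun u v => b u v) x y‖
        ≤ K * ‖T.eval (fun u v => b u v) x y‖ :=
          mul_le_mul_of_nonneg_right h1 (norm_nonneg _)
      _ ≤ K * BchAux.wt B ‖x‖ ‖y‖ T := mul_le_mul_of_nonneg_left h2 hK0.le
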